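/- Let Y be a separable real Banach space and ι : Y → C([0,2π],ℝ) an injective continuous linear map with dense range. Let f : ℝ → ℝ be smooth with f' nowhere flat, and let u ∈ Y be such that ι(u) is a nonconstant function. Then the linear map Y → M₂(ℝ) sending v to Φ(2π)·∫₀^{2π} f''((ι u)(t))·(ι v)(t)·Φ(t)⁻¹·N₀·Φ(t) dt, where Φ = Φ_{f'∘ι u}, has range equal to {Φ(2π)·M : M ∈ M₂(ℝ), tr M = 0}; that is, the restricted nonlinear monodromy map is a submersion at u. -/

import Mathlib

open Real Set Matrix

noncomputable section

/-- A smooth function is nowhere flat if some derivative of order `r' ≤ r` (for a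
uniform `r`) is nonzero at every point. -/
def NowhereFlat (g : ℝ → ℝ) : Prop :=
  ∃ r : ℕ, 0 < r ∧ ∀ x : ℝ, ∃ r' : ℕ, 0 < r' ∧ r' ≤ r ∧ iteratedDeriv r' g x ≠ 0

/-- The matrix `N₀ = [[0,0],[1,0]]`. -/
def N0 : Matrix (Fin 2) (Fin 2) ℝ := !![0, 0; 1, 0]

/-- Clamping map `ℝ → [0, 2π]`; it is the identity on `[0, 2π]`. -/
def clamp (t : ℝ) : Icc (0:ℝ) (2 * π) := Set.projIcc 0 (2 * π) (by positivity) t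

/- ### Auxiliary lemmas -/

lemma clamp_continuous : Continuous clamp := by unfold clamp; exact continuous_projIcc

lemma clamp_val (s : Icc (0:ℝ) (2 * π)) : clamp s = s := projIcc_val (by positivity) s

lemma mulmat_entry0 (q : ℝ) (A : Matrix (Fin 2) (Fin 2) ℝ) (j : Fin 2) :
    (!![0, 1; q, 0] * A) 0 j = A 1 j := by
  simp [Matrix.mul_apply, Fin.sum_univ_two]

lemma mulmat_entry1 (q : ℝ) (A : Matrix (Fin 2) (Fin 2) ℝ) (j : Fin 2) :
    (!![0, 1; q, 0] * A) 1 j = q * A 0 j := by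
  simp [Matrix.mul_apply, Fin.sum_univ_two]

section FM
variable {T : ℝ} (hT : 0 < T) {q : ℝ → ℝ} {Φ : ℝ → Matrix (Fin 2) (Fin 2) ℝ}
  (hΦ0 : Φ 0 = 1)
  (hd : ∀ t ∈ Icc (0:ℝ) T, ∀ i j, HasDerivWithinAt (fun s => Φ s i j)
      ((!![0, 1; q t, 0] * Φ t) i j) (Icc 0 T) t)

include hd

lemma fm_cont (i j : Fin 2) : ContinuousOn (fun t => Φ t i j) (Icc 0 T) :=
  fun t ht => (hd t ht i j).continuousWithinAt

include hΦ0 hT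

lemma fm_det : ∀ t ∈ Icc (0:ℝ) T, Φ t 0 0 * Φ t 1 1 - Φ t 0 1 * Φ t 1 0 = 1 := by
  intro t ht
  have key : ∀ x ∈ Icc (0:ℝ) T, HasDerivWithinAt
      (fun s => Φ s 0 0 * Φ s 1 1 - Φ s 0 1 * Φ s 1 0) 0 (Icc 0 T) x := by
    intro x hx
    have h00 := hd x hx 0 0; have h01 := hd x hx 0 1
    have h10 := hd x hx 1 0; have h11 := hd x hx 1 1
    rw [mulmat_entry0] at h00 h01
    rw [mulmat_entry1] at h10 h11
    have := ((h00.mul h11).sub (h01.mul h10))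
    convert this using 1 <;> first | rfl | ring
  have := Convex.norm_image_sub_le_of_norm_hasDerivWithin_le key
    (C := 0) (fun x _ => by simp) (convex_Icc 0 T) (left_mem_Icc.2 hT.le) ht
  have h0 : Φ 0 0 0 * Φ 0 1 1 - Φ 0 0 1 * Φ 0 1 0 = 1 := by
    rw [hΦ0]; simp
  rw [zero_mul, norm_le_zero_iff, sub_eq_zero] at this
  rw [this, h0]

end FM

section FMC
variable {T : ℝ} (hT : 0 < T) {q : ℝ → ℝ} {Φ : ℝ → Matrix (Fin 2) (Fin 2) ℝ}
  (hd : ∀ t ∈ Icc (0:ℝ) T, ∀ i j, HasDerivWithinAt (fun s => Φ s i j)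
      ((!![0, 1; q t, 0] * Φ t) i j) (Icc 0 T) t)
  (hdet : ∀ t ∈ Icc (0:ℝ) T, Φ t 0 0 * Φ t 1 1 - Φ t 0 1 * Φ t 1 0 = 1)

include hT hd hdet

lemma fm_combo {l r α β : ℝ} (hlr : l < r) (hsub : Ioo l r ⊆ Icc 0 T)
    (hαβ : ¬ (α = 0 ∧ β = 0))
    (hz : ∀ t ∈ Ioo l r, α * Φ t 0 0 + β * Φ t 0 1 = 0) : False := by
  set t₀ : ℝ := (l + r) / 2 with ht₀def
  have ht₀ : t₀ ∈ Ioo l r := ⟨by linarith, by linarith⟩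
  have ht₀I : t₀ ∈ Icc (0:ℝ) T := hsub ht₀
  have h00 := hd t₀ ht₀I 0 0
  have h01 := hd t₀ ht₀I 0 1
  rw [mulmat_entry0] at h00 h01
  have hD : HasDerivWithinAt (fun s => α * Φ s 0 0 + β * Φ s 0 1)
      (α * Φ t₀ 1 0 + β * Φ t₀ 1 1) (Icc 0 T) t₀ :=
    (h00.const_mul α).add (h01.const_mul β)
  have hev : (fun s => α * Φ s 0 0 + β * Φ s 0 1) =ᶠ[nhds t₀] fun _ => (0:ℝ) :=
    Filter.eventuallyEq_of_mem (isOpen_Ioo.mem_nhds ht₀) hz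
  have hD0 : HasDerivWithinAt (fun s => α * Φ s 0 0 + β * Φ s 0 1) 0 (Icc 0 T) t₀ :=
    ((hasDerivAt_const t₀ (0:ℝ)).congr_of_eventuallyEq hev).hasDerivWithinAt
  have hu : UniqueDiffWithinAt ℝ (Icc (0:ℝ) T) t₀ := (uniqueDiffOn_Icc hT) t₀ ht₀I
  have e2 : α * Φ t₀ 1 0 + β * Φ t₀ 1 1 = 0 := by
    rw [← hD.derivWithin hu, hD0.derivWithin hu]
  have e1 : α * Φ t₀ 0 0 + β * Φ t₀ 0 1 = 0 := hz t₀ ht₀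
  have e3 := hdet t₀ ht₀I
  apply hαβ
  constructor
  · have : α * (Φ t₀ 0 0 * Φ t₀ 1 1 - Φ t₀ 0 1 * Φ t₀ 1 0) = 0 := by
      linear_combination Φ t₀ 1 1 * e1 - Φ t₀ 0 1 * e2
    rw [e3, mul_one] at this; exact this
  · have : β * (Φ t₀ 0 0 * Φ t₀ 1 1 - Φ t₀ 0 1 * Φ t₀ 1 0) = 0 := by
      linear_combination Φ t₀ 0 0 * e2 - Φ t₀ 1 0 * e1
    rw [e3, mul_one] at this; exact this

end FMC

lemma prod_zero_dichotomy {l r : ℝ} {z₁ z₂ : ℝ → ℝ}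
    (h₁ : ContinuousOn z₁ (Ioo l r)) (h₂ : ContinuousOn z₂ (Ioo l r))
    (hprod : ∀ t ∈ Ioo l r, z₁ t * z₂ t = 0)
    (hnb : ∀ t ∈ Ioo l r, ¬ (z₁ t = 0 ∧ z₂ t = 0)) :
    (∀ t ∈ Ioo l r, z₁ t = 0) ∨ (∀ t ∈ Ioo l r, z₂ t = 0) := by
  set s := Ioo l r
  have hso : IsOpen s := isOpen_Ioo
  have hu : IsOpen (s ∩ z₂ ⁻¹' {x | x ≠ 0}) :=
    h₂.isOpen_inter_preimage hso (isOpen_ne)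
  have hv : IsOpen (s ∩ z₁ ⁻¹' {x | x ≠ 0}) :=
    h₁.isOpen_inter_preimage hso (isOpen_ne)
  have hdisj : Disjoint (s ∩ z₂ ⁻¹' {x | x ≠ 0}) (s ∩ z₁ ⁻¹' {x | x ≠ 0}) := by
    rw [Set.disjoint_left]
    rintro t ⟨hts, h2⟩ ⟨-, h1⟩
    exact mul_ne_zero h1 h2 (hprod t hts)
  have hcover : s ⊆ (s ∩ z₂ ⁻¹' {x | x ≠ 0}) ∪ (s ∩ z₁ ⁻¹' {x | x ≠ 0}) := by
    intro t hts
    rcases eq_or_ne (z₂ t) 0 with h2 | h2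
    · have h1 : z₁ t ≠ 0 := fun h1 => hnb t hts ⟨h1, h2⟩
      exact Or.inr ⟨hts, h1⟩
    · exact Or.inl ⟨hts, h2⟩
  rcases (isPreconnected_Ioo (a := l) (b := r)).subset_or_subset hu hv hdisj hcover with h | h
  · left; intro t hts
    have h2 : z₂ t ≠ 0 := (h hts).2
    rcases mul_eq_zero.1 (hprod t hts) with h' | h'
    · exact h'
    · exact absurd h' h2
  · right; intro t hts
    have h1 : z₁ t ≠ 0 := (h hts).2
    rcases mul_eq_zero.1 (hprod t hts) with h' | h'
    · exact absurd h' h1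
    · exact h'

section FM2
variable {T : ℝ} (hT : 0 < T) {q : ℝ → ℝ} {Φ : ℝ → Matrix (Fin 2) (Fin 2) ℝ}
  (hd : ∀ t ∈ Icc (0:ℝ) T, ∀ i j, HasDerivWithinAt (fun s => Φ s i j)
      ((!![0, 1; q t, 0] * Φ t) i j) (Icc 0 T) t)
  (hdet : ∀ t ∈ Icc (0:ℝ) T, Φ t 0 0 * Φ t 1 1 - Φ t 0 1 * Φ t 1 0 = 1)

include hdet in
lemma fm_nz : ∀ t ∈ Icc (0:ℝ) T, ¬ (Φ t 0 0 = 0 ∧ Φ t 0 1 = 0) := by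
  rintro t ht ⟨h1, h2⟩
  have := hdet t ht
  rw [h1, h2] at this
  simp at this

include hT hd hdet in
lemma fm_quad {l r A B C : ℝ} (hlr : l < r) (hsub : Ioo l r ⊆ Icc 0 T)
    (hABC : ¬ (A = 0 ∧ B = 0 ∧ C = 0))
    (hg : ∀ t ∈ Ioo l r, A * Φ t 0 0 ^ 2 + B * (Φ t 0 0 * Φ t 0 1) + C * Φ t 0 1 ^ 2 = 0) :
    False := by
  have hc1 : ContinuousOn (fun t => Φ t 0 0) (Ioo l r) :=
    (fm_cont hd 0 0).mono hsub
  have hc2 : ContinuousOn (fun t => Φ t 0 1) (Ioo l r) :=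
    (fm_cont hd 0 1).mono hsub
  have hnz := fm_nz hdet
  rcases eq_or_ne A 0 with hA | hA
  · rcases eq_or_ne B 0 with hB | hB
    · have hC : C ≠ 0 := fun hC => hABC ⟨hA, hB, hC⟩
      refine fm_combo hT hd hdet hlr hsub (α := 0) (β := 1) (by simp) ?_
      intro t ht
      have := hg t ht
      rw [hA, hB] at this
      have h2 : Φ t 0 1 ^ 2 = 0 := by
        have := mul_eq_zero.1 (by linarith : C * Φ t 0 1 ^ 2 = 0)
        tauto
      have := pow_eq_zero_iff (n := 2) (by norm_num) |>.1 h2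
      rw [this]; ring
    · have hprod : ∀ t ∈ Ioo l r, Φ t 0 1 * (B * Φ t 0 0 + C * Φ t 0 1) = 0 := by
        intro t ht
        have := hg t ht
        rw [hA] at this
        nlinarith [this]
      have hnb : ∀ t ∈ Ioo l r, ¬ (Φ t 0 1 = 0 ∧ B * Φ t 0 0 + C * Φ t 0 1 = 0) := by
        rintro t ht ⟨h1, h2⟩
        rw [h1] at h2
        have : Φ t 0 0 = 0 := by
          have := mul_eq_zero.1 (by linarith : B * Φ t 0 0 = 0); tauto
        exact hnz t (hsub ht) ⟨this, h1⟩
      rcases prod_zero_dichotomy hc2 (by fun_prop) hprod hnb with h | h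
      · refine fm_combo hT hd hdet hlr hsub (α := 0) (β := 1) (by simp) ?_
        intro t ht; have := h t ht; rw [this]; ring
      · exact fm_combo hT hd hdet hlr hsub (α := B) (β := C)
          (fun hh => hB hh.1) h
  · have hy2 : ∀ t ∈ Ioo l r, Φ t 0 1 ≠ 0 := by
      intro t ht h2
      have := hg t ht
      rw [h2] at this
      have h1 : Φ t 0 0 = 0 := by
        have h1sq : A * Φ t 0 0 ^ 2 = 0 := by linarith [this]
        have := mul_eq_zero.1 h1sq
        rcases this with h | h
        · exact absurd h hA
        · exact pow_eq_zero_iff (n := 2) (by norm_num) |>.1 h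
      exact hnz t (hsub ht) ⟨h1, h2⟩
    set t₀ : ℝ := (l + r) / 2 with ht₀def
    have ht₀ : t₀ ∈ Ioo l r := ⟨by linarith, by linarith⟩
    have hdisc : 0 ≤ B ^ 2 - 4 * A * C := by
      have h2 := hy2 t₀ ht₀
      have heq := hg t₀ ht₀
      have hx : A * (Φ t₀ 0 0 / Φ t₀ 0 1 * (Φ t₀ 0 0 / Φ t₀ 0 1))
          + B * (Φ t₀ 0 0 / Φ t₀ 0 1) + C = 0 := by
        field_simp
        linear_combination heq
      have := discrim_eq_sq_of_quadratic_eq_zero hx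
      rw [discrim] at this
      nlinarith [sq_nonneg (2 * A * (Φ t₀ 0 0 / Φ t₀ 0 1) + B)]
    set s : ℝ := Real.sqrt (B ^ 2 - 4 * A * C) with hsdef
    have hs : s * s = B ^ 2 - 4 * A * C := Real.mul_self_sqrt hdisc
    set lam : ℝ := (-B + s) / (2 * A) with hlam
    set mu : ℝ := (-B - s) / (2 * A) with hmu
    have hsum : A * (lam + mu) = -B := by
      rw [hlam, hmu]; field_simp; ring
    have h2A : (2 * A) ≠ 0 := mul_ne_zero two_ne_zero hA
    have hprodc : A * (lam * mu) = C := by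
      rw [hlam, hmu, div_mul_div_comm, ← mul_div_assoc]
      rw [div_eq_iff (mul_ne_zero h2A h2A)]
      linear_combination -A * hs
    have hfact : ∀ x y : ℝ, A * ((x - lam * y) * (x - mu * y))
        = A * x ^ 2 + B * (x * y) + C * y ^ 2 := by
      intro x y
      linear_combination (-(x * y)) * hsum + (y ^ 2) * hprodc
    have hprod : ∀ t ∈ Ioo l r,
        (Φ t 0 0 - lam * Φ t 0 1) * (Φ t 0 0 - mu * Φ t 0 1) = 0 := by
      intro t ht
      have := hfact (Φ t 0 0) (Φ t 0 1)
      rw [hg t ht] at this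
      exact (mul_eq_zero.1 this).resolve_left hA
    rcases eq_or_ne lam mu with hlm | hlm
    · refine fm_combo hT hd hdet hlr hsub (α := 1) (β := -lam) (by norm_num) ?_
      intro t ht
      have := hprod t ht
      rw [← hlm] at this
      have := mul_self_eq_zero.1 this
      linarith [this]
    · have hnb : ∀ t ∈ Ioo l r,
          ¬ (Φ t 0 0 - lam * Φ t 0 1 = 0 ∧ Φ t 0 0 - mu * Φ t 0 1 = 0) := by
        rintro t ht ⟨h1, h2⟩
        have : (lam - mu) * Φ t 0 1 = 0 := by linarith
        rcases mul_eq_zero.1 this with h | h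
        · exact hlm (by linarith)
        · exact hy2 t ht h
      rcases prod_zero_dichotomy (by fun_prop) (by fun_prop) hprod hnb with h | h
      · refine fm_combo hT hd hdet hlr hsub (α := 1) (β := -lam) (by norm_num) ?_
        intro t ht; have := h t ht; linarith
      · refine fm_combo hT hd hdet hlr hsub (α := 1) (β := -mu) (by norm_num) ?_
        intro t ht; have := h t ht; linarith

end FM2

section FA
variable {Y : Type*} [NormedAddCommGroup Y] [NormedSpace ℝ Y]

lemma dense_kill (ι : Y →L[ℝ] C(Icc (0:ℝ) (2 * π), ℝ)) (hdense : DenseRange ι)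
    (h : C(Icc (0:ℝ) (2 * π), ℝ))
    (hz : ∀ v : Y, ∫ t in (0:ℝ)..(2 * π), h (clamp t) * (ι v) (clamp t) = 0) :
    ∀ s : Icc (0:ℝ) (2 * π), h s = 0 := by
  have hπ : (0:ℝ) < 2 * π := by positivity
  have hcont : ∀ w : C(Icc (0:ℝ) (2 * π), ℝ),
      Continuous (fun t : ℝ => h (clamp t) * w (clamp t)) := by
    intro w
    exact (h.continuous.comp clamp_continuous).mul (w.continuous.comp clamp_continuous)
  have hint : ∀ w : C(Icc (0:ℝ) (2 * π), ℝ),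
      IntervalIntegrable (fun t : ℝ => h (clamp t) * w (clamp t))
        MeasureTheory.volume 0 (2 * π) := fun w => (hcont w).intervalIntegrable _ _
  set T : C(Icc (0:ℝ) (2 * π), ℝ) →ₗ[ℝ] ℝ :=
    { toFun := fun w => ∫ t in (0:ℝ)..(2 * π), h (clamp t) * w (clamp t)
      map_add' := by
        intro w₁ w₂
        try dsimp only
        have : (fun t : ℝ => h (clamp t) * (w₁ + w₂) (clamp t))
            = fun t : ℝ => h (clamp t) * w₁ (clamp t) + h (clamp t) * w₂ (clamp t) := by
          funext t; simp [mul_add]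
        rw [this, intervalIntegral.integral_add (hint w₁) (hint w₂)]
      map_smul' := by
        intro c w
        dsimp only [RingHom.id_apply]
        have : (fun t : ℝ => h (clamp t) * (c • w) (clamp t))
            = fun t : ℝ => c • (h (clamp t) * w (clamp t)) := by
          funext t; simp [smul_eq_mul]; ring
        rw [this, intervalIntegral.integral_smul] } with hT
  have hTbound : ∀ w, ‖T w‖ ≤ (2 * π * ‖h‖) * ‖w‖ := by
    intro w
    have : ‖T w‖ ≤ ‖h‖ * ‖w‖ * |2 * π - 0| := by
      apply intervalIntegral.norm_integral_le_of_norm_le_const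
      intro x _
      rw [norm_mul]
      exact mul_le_mul (h.norm_coe_le_norm _) (w.norm_coe_le_norm _)
        (norm_nonneg _) (norm_nonneg _)
    calc ‖T w‖ ≤ ‖h‖ * ‖w‖ * |2 * π - 0| := this
    _ = (2 * π * ‖h‖) * ‖w‖ := by rw [sub_zero, abs_of_pos hπ]; ring
  set Tc : C(Icc (0:ℝ) (2 * π), ℝ) →L[ℝ] ℝ := T.mkContinuous _ hTbound with hTc
  have hTzero : ∀ w, Tc w = 0 := by
    have : (Tc : C(Icc (0:ℝ) (2 * π), ℝ) → ℝ) = fun _ => 0 := by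
      apply Continuous.ext_on hdense Tc.continuous continuous_const
      rintro _ ⟨v, rfl⟩
      exact hz v
    intro w; exact congrFun this w
  have hsq : ∫ t in (0:ℝ)..(2 * π), h (clamp t) * h (clamp t) = 0 := hTzero h
  have hae := (intervalIntegral.integral_eq_zero_iff_of_le_of_nonneg_ae hπ.le
    (Filter.Eventually.of_forall fun t => mul_self_nonneg _) (hint h)).1 hsq
  have hIoo : ∀ t ∈ Ioo (0:ℝ) (2 * π), h (clamp t) * h (clamp t) = 0 := by
    intro t ht
    by_contra hne
    set F := fun t : ℝ => h (clamp t) * h (clamp t) with hF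
    have hFo : IsOpen {x : ℝ | F x ≠ 0} := by
      have : {x : ℝ | F x ≠ 0} = F ⁻¹' ({0}ᶜ) := rfl
      rw [this]
      exact (isOpen_compl_singleton).preimage (hcont h)
    obtain ⟨ε, hε, hball⟩ := Metric.isOpen_iff.1 hFo t hne
    set ε' := min ε (min (t - 0) (2 * π - t)) with hε'
    have hε'0 : 0 < ε' := lt_min hε (lt_min (by linarith [ht.1]) (by linarith [ht.2]))
    have hsub : Metric.ball t ε' ⊆ {x | F x ≠ 0} ∩ Ioc 0 (2 * π) := by
      intro x hx
      rw [Metric.mem_ball, Real.dist_eq, abs_lt] at hx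
      constructor
      · refine hball ?_
        rw [Metric.mem_ball, Real.dist_eq, abs_lt]
        have := min_le_left ε (min (t - 0) (2 * π - t))
        constructor <;> linarith [hx.1, hx.2]
      · constructor
        · have := min_le_left (t - 0) (2 * π - t)
          have := min_le_right ε (min (t - 0) (2 * π - t))
          linarith [hx.1]
        · have h1 := min_le_right (t - 0) (2 * π - t)
          have h2 := min_le_right ε (min (t - 0) (2 * π - t))
          linarith [hx.2]
    have hnull : MeasureTheory.volume ({x | F x ≠ 0} ∩ Ioc 0 (2 * π)) = 0 := by
      have := MeasureTheory.ae_iff.1 hae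
      rw [MeasureTheory.Measure.restrict_apply₀'] at this
      · convert this using 2
        rfl
      · exact measurableSet_Ioc.nullMeasurableSet
    have : MeasureTheory.volume (Metric.ball t ε') = 0 :=
      MeasureTheory.measure_mono_null hsub hnull
    rw [Real.volume_ball] at this
    simp at this
    linarith
  intro s
  have hIcc : ∀ t ∈ Icc (0:ℝ) (2 * π), h (clamp t) * h (clamp t) = 0 := by
    have hcl : closure (Ioo (0:ℝ) (2 * π)) = Icc 0 (2 * π) := closure_Ioo hπ.ne
    intro t ht
    rw [← hcl] at ht
    exact Set.EqOn.closure (fun x hx => hIoo x hx) (hcont h) continuous_const ht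
  have := hIcc s s.2
  rw [clamp_val] at this
  exact mul_self_eq_zero.1 this
end FA

lemma flat_contra {f : ℝ → ℝ} (hnf : NowhereFlat (deriv f)) {A B : ℝ} (hAB : A < B)
    (hzero : ∀ x ∈ Ioo A B, deriv (deriv f) x = 0) : False := by
  have key : ∀ k : ℕ, ∀ x ∈ Ioo A B, deriv^[k] (deriv (deriv f)) x = 0 := by
    intro k
    induction k with
    | zero => exact hzero
    | succ k ih =>
      intro x hx
      rw [Function.iterate_succ_apply']
      have hev : deriv^[k] (deriv (deriv f)) =ᶠ[nhds x] fun _ => (0:ℝ) :=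
        Filter.eventuallyEq_of_mem (isOpen_Ioo.mem_nhds hx) ih
      rw [hev.deriv_eq, deriv_const]
  obtain ⟨r, -, hr⟩ := hnf
  set x₀ : ℝ := (A + B) / 2 with hx₀
  have hx₀m : x₀ ∈ Ioo A B := ⟨by linarith, by linarith⟩
  obtain ⟨r', hr'0, -, hne⟩ := hr x₀
  apply hne
  rw [iteratedDeriv_eq_iterate]
  obtain ⟨k, rfl⟩ : ∃ k, r' = k + 1 := ⟨r' - 1, (Nat.succ_pred_eq_of_pos hr'0).symm⟩
  rw [Function.iterate_succ_apply]
  exact key k x₀ hx₀m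

lemma sep_lemma {p : Submodule ℝ (EuclideanSpace ℝ (Fin 3))} (hp : p ≠ ⊤) :
    ∃ ψ : EuclideanSpace ℝ (Fin 3), ψ ≠ 0 ∧
      ∀ x ∈ p, ψ 0 * x 0 + ψ 1 * x 1 + ψ 2 * x 2 = 0 := by
  have hbot : pᗮ ≠ ⊥ := fun hb => hp (Submodule.orthogonal_eq_bot_iff.1 hb)
  obtain ⟨ψ, hψp, hψ0⟩ := Submodule.exists_mem_ne_zero_of_ne_bot hbot
  refine ⟨ψ, hψ0, fun x hx => ?_⟩
  have := (Submodule.mem_orthogonal p ψ).1 hψp x hx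
  rw [real_inner_comm] at this
  rw [PiLp.inner_apply] at this
  simp only [RCLike.inner_apply, conj_trivial] at this
  rw [Fin.sum_univ_three] at this
  linarith [this]

section IL
variable {Y : Type*} [NormedAddCommGroup Y] [NormedSpace ℝ Y]
  (ι : Y →L[ℝ] C(Icc (0:ℝ) (2 * π), ℝ)) (c w : ℝ → ℝ)
  (hc : Continuous c) (hw : ContinuousOn w (Icc 0 (2 * π)))

include hc hw

lemma int_integrable (v : Y) :
    IntervalIntegrable (fun t => c t * ι v (clamp t) * w t)
      MeasureTheory.volume 0 (2 * π) := by
  apply ContinuousOn.intervalIntegrable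
  rw [uIcc_of_le (by positivity : (0:ℝ) ≤ 2 * π)]
  exact ((hc.continuousOn.mul
    (((ι v).continuous.comp clamp_continuous).continuousOn)).mul hw)

lemma int_add (v₁ v₂ : Y) :
    (∫ t in (0:ℝ)..(2 * π), c t * ι (v₁ + v₂) (clamp t) * w t)
      = (∫ t in (0:ℝ)..(2 * π), c t * ι v₁ (clamp t) * w t)
        + ∫ t in (0:ℝ)..(2 * π), c t * ι v₂ (clamp t) * w t := by
  rw [← intervalIntegral.integral_add (int_integrable ι c w hc hw v₁)
    (int_integrable ι c w hc hw v₂)]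
  apply intervalIntegral.integral_congr
  intro t _
  simp only [map_add, ContinuousMap.add_apply]
  ring

omit hc hw in
lemma int_smul (a : ℝ) (v : Y) :
    (∫ t in (0:ℝ)..(2 * π), c t * ι (a • v) (clamp t) * w t)
      = a * ∫ t in (0:ℝ)..(2 * π), c t * ι v (clamp t) * w t := by
  have : a * (∫ t in (0:ℝ)..(2 * π), c t * ι v (clamp t) * w t)
      = ∫ t in (0:ℝ)..(2 * π), a • (c t * ι v (clamp t) * w t) := by
    rw [intervalIntegral.integral_smul]; rfl
  rw [this]
  apply intervalIntegral.integral_congr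
  intro t _
  simp only [_root_.map_smul, ContinuousMap.smul_apply, smul_eq_mul]
  ring

end IL

set_option maxHeartbeats 2000000 in
/-- Corollary 3.3. Let `Y` be a separable Banach space, densely and
continuously injected in `C([0,2π],ℝ)` by `ι`, `f` smooth with nowhere flat `f'`, and
`ι u` nonconstant. Then the derivative of the restricted nonlinear monodromy at `u`,
`v ↦ Φ(2π)·∫₀^{2π} f''((ιu)(t))·(ιv)(t)·Φ(t)⁻¹·N₀·Φ(t) dt`, has range exactly
`{Φ(2π)·M : tr M = 0}`. -/
theorem stmt_10 (Y : Type*) [NormedAddCommGroup Y] [NormedSpace ℝ Y] [CompleteSpace Y]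
    [TopologicalSpace.SeparableSpace Y]
    (ι : Y →L[ℝ] C(Icc (0:ℝ) (2 * π), ℝ))
    (hinj : Function.Injective ι) (hdense : DenseRange ι)
    (f : ℝ → ℝ) (hf : ContDiff ℝ (⊤ : ℕ∞) f) (hnf : NowhereFlat (deriv f))
    (u : Y) (huc : ¬ ∃ c : ℝ, ∀ s : Icc (0:ℝ) (2 * π), ι u s = c)
    -- `Φ` the fundamental matrix of the potential `f' ∘ ι u` on `[0,2π]`:
    (Φ : ℝ → Matrix (Fin 2) (Fin 2) ℝ)
    (hΦ0 : Φ 0 = 1)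
    (hΦ : ∀ t ∈ Icc (0:ℝ) (2 * π), ∀ i j, HasDerivWithinAt (fun s => Φ s i j)
      ((!![0, 1; deriv f (ι u (clamp t)), 0] * Φ t) i j) (Icc 0 (2 * π)) t) :
    Set.range (fun v : Y => Φ (2 * π) *
        Matrix.of (fun i j : Fin 2 =>
          ∫ t in (0:ℝ)..(2 * π),
            deriv (deriv f) (ι u (clamp t)) * (ι v (clamp t)) *
              (((Φ t)⁻¹ * N0 * Φ t) i j))) =
      {X : Matrix (Fin 2) (Fin 2) ℝ |
        ∃ M : Matrix (Fin 2) (Fin 2) ℝ, M.trace = 0 ∧ X = Φ (2 * π) * M} := by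
  have hπ : (0:ℝ) < 2 * π := by positivity
  have h2le : (0:ℝ) ≤ 2 * π := hπ.le
  have huIcc : uIcc (0:ℝ) (2 * π) = Icc 0 (2 * π) := uIcc_of_le h2le
  have hdet := fm_det hπ hΦ0 hΦ
  have hc00 : ContinuousOn (fun t => Φ t 0 0) (Icc 0 (2 * π)) := fm_cont hΦ 0 0
  have hc01 : ContinuousOn (fun t => Φ t 0 1) (Icc 0 (2 * π)) := fm_cont hΦ 0 1
  have hf2 : Continuous (deriv (deriv f)) := by
    have h1 : ContDiff ℝ (⊤:ℕ∞) (deriv f) := (contDiff_infty_iff_deriv.1 hf).2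
    exact ((contDiff_infty_iff_deriv.1 h1).2).continuous
  have hddc : Continuous (fun t : ℝ => deriv (deriv f) (ι u (clamp t))) :=
    hf2.comp ((ι u).continuous.comp clamp_continuous)
  -- explicit form of the conjugated matrix
  have hB : ∀ t ∈ Icc (0:ℝ) (2 * π), (Φ t)⁻¹ * N0 * Φ t =
      !![-(Φ t 0 0 * Φ t 0 1), -(Φ t 0 1 * Φ t 0 1);
         Φ t 0 0 * Φ t 0 0, Φ t 0 0 * Φ t 0 1] := by
    intro t ht
    have hdet1 : (Φ t).det = 1 := by rw [Matrix.det_fin_two]; exact hdet t ht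
    have hinv : (Φ t)⁻¹ = !![Φ t 1 1, -(Φ t 0 1); -(Φ t 1 0), Φ t 0 0] := by
      rw [Matrix.inv_def, hdet1, Matrix.adjugate_fin_two]
      simp
    rw [hinv]
    ext i j
    fin_cases i <;> fin_cases j <;>
      simp [N0, Matrix.mul_apply, Fin.sum_univ_two] <;> ring
  have h00 : ∀ t ∈ Icc (0:ℝ) (2 * π),
      ((Φ t)⁻¹ * N0 * Φ t) 0 0 = -(Φ t 0 0 * Φ t 0 1) := by
    intro t ht; rw [hB t ht]; simp
  have h01 : ∀ t ∈ Icc (0:ℝ) (2 * π),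
      ((Φ t)⁻¹ * N0 * Φ t) 0 1 = -(Φ t 0 1 * Φ t 0 1) := by
    intro t ht; rw [hB t ht]; simp
  have h10 : ∀ t ∈ Icc (0:ℝ) (2 * π),
      ((Φ t)⁻¹ * N0 * Φ t) 1 0 = Φ t 0 0 * Φ t 0 0 := by
    intro t ht; rw [hB t ht]; simp
  have h11 : ∀ t ∈ Icc (0:ℝ) (2 * π),
      ((Φ t)⁻¹ * N0 * Φ t) 1 1 = Φ t 0 0 * Φ t 0 1 := by
    intro t ht; rw [hB t ht]; simp
  have hw00 : ContinuousOn (fun t => -(Φ t 0 0 * Φ t 0 1)) (Icc 0 (2 * π)) :=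
    (hc00.mul hc01).neg
  have hw01 : ContinuousOn (fun t => -(Φ t 0 1 * Φ t 0 1)) (Icc 0 (2 * π)) :=
    (hc01.mul hc01).neg
  have hw10 : ContinuousOn (fun t => Φ t 0 0 * Φ t 0 0) (Icc 0 (2 * π)) :=
    hc00.mul hc00
  -- rewriting integrals to explicit entries
  have hent : ∀ (v : Y) (i j : Fin 2) (w : ℝ → ℝ),
      (∀ t ∈ Icc (0:ℝ) (2 * π), ((Φ t)⁻¹ * N0 * Φ t) i j = w t) →
      (∫ t in (0:ℝ)..(2 * π), deriv (deriv f) (ι u (clamp t)) * (ι v (clamp t)) *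
        (((Φ t)⁻¹ * N0 * Φ t) i j))
        = ∫ t in (0:ℝ)..(2 * π),
            deriv (deriv f) (ι u (clamp t)) * (ι v (clamp t)) * w t := by
    intro v i j w hw
    apply intervalIntegral.integral_congr
    intro t ht
    rw [huIcc] at ht
    dsimp only
    rw [hw t ht]
  have hI11 : ∀ v : Y,
      (∫ t in (0:ℝ)..(2 * π), deriv (deriv f) (ι u (clamp t)) * (ι v (clamp t)) *
        (((Φ t)⁻¹ * N0 * Φ t) 1 1))
      = -(∫ t in (0:ℝ)..(2 * π), deriv (deriv f) (ι u (clamp t)) * (ι v (clamp t)) *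
        (((Φ t)⁻¹ * N0 * Φ t) 0 0)) := by
    intro v
    rw [hent v 1 1 _ h11, hent v 0 0 _ h00, ← intervalIntegral.integral_neg]
    apply intervalIntegral.integral_congr
    intro t _
    ring
  ext X
  simp only [Set.mem_range, Set.mem_setOf_eq]
  constructor
  · rintro ⟨v, rfl⟩
    refine ⟨Matrix.of (fun i j : Fin 2 =>
      ∫ t in (0:ℝ)..(2 * π), deriv (deriv f) (ι u (clamp t)) * (ι v (clamp t)) *
        (((Φ t)⁻¹ * N0 * Φ t) i j)), ?_, rfl⟩
    rw [Matrix.trace_fin_two]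
    simp only [Matrix.of_apply]
    rw [hI11 v]
    ring
  · rintro ⟨M, hM, rfl⟩
    -- the linearized map into ℝ³
    set Llin : Y →ₗ[ℝ] EuclideanSpace ℝ (Fin 3) :=
      { toFun := fun v =>
          WithLp.toLp 2 ![∫ t in (0:ℝ)..(2 * π), deriv (deriv f) (ι u (clamp t)) * (ι v (clamp t)) *
              (-(Φ t 0 0 * Φ t 0 1)),
            ∫ t in (0:ℝ)..(2 * π), deriv (deriv f) (ι u (clamp t)) * (ι v (clamp t)) *
              (-(Φ t 0 1 * Φ t 0 1)),
            ∫ t in (0:ℝ)..(2 * π), deriv (deriv f) (ι u (clamp t)) * (ι v (clamp t)) *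
              (Φ t 0 0 * Φ t 0 0)]
        map_add' := by
          intro v₁ v₂
          ext i
          fin_cases i <;>
            simp only [PiLp.add_apply, Matrix.cons_val_zero, Matrix.cons_val_one,
              Matrix.head_cons, Matrix.cons_val_two, Matrix.tail_cons]
          · exact int_add ι _ _ hddc hw00 v₁ v₂
          · exact int_add ι _ _ hddc hw01 v₁ v₂
          · exact int_add ι _ _ hddc hw10 v₁ v₂
        map_smul' := by
          intro a v
          ext i
          fin_cases i <;>
            simp only [PiLp.smul_apply, RingHom.id_apply, Matrix.cons_val_zero,
              Matrix.cons_val_one, Matrix.head_cons, Matrix.cons_val_two,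
              Matrix.tail_cons, smul_eq_mul]
          · exact int_smul ι _ _ a v
          · exact int_smul ι _ _ a v
          · exact int_smul ι _ _ a v } with hLlin
    -- surjectivity of the linearized map
    have hrange : LinearMap.range Llin = ⊤ := by
      by_contra hne
      obtain ⟨ψ, hψ0, hann⟩ := sep_lemma hne
      have hABC : ¬ (ψ 2 = 0 ∧ -ψ 0 = 0 ∧ -ψ 1 = 0) := by
        rintro ⟨h2, h0, h1⟩
        rw [neg_eq_zero] at h0 h1
        apply hψ0
        ext i
        fin_cases i
        · exact h0
        · exact h1
        · exact h2
      have hcomb : ∀ v : Y, (∫ t in (0:ℝ)..(2 * π),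
          deriv (deriv f) (ι u (clamp t)) * (ι v (clamp t)) *
            (ψ 0 * (-(Φ t 0 0 * Φ t 0 1)) + ψ 1 * (-(Φ t 0 1 * Φ t 0 1))
              + ψ 2 * (Φ t 0 0 * Φ t 0 0))) = 0 := by
        intro v
        have h := hann (Llin v) (LinearMap.mem_range_self _ v)
        have e0 : (Llin v) 0 = ∫ t in (0:ℝ)..(2 * π),
            deriv (deriv f) (ι u (clamp t)) * (ι v (clamp t)) * (-(Φ t 0 0 * Φ t 0 1)) := rfl
        have e1 : (Llin v) 1 = ∫ t in (0:ℝ)..(2 * π),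
            deriv (deriv f) (ι u (clamp t)) * (ι v (clamp t)) * (-(Φ t 0 1 * Φ t 0 1)) := rfl
        have e2 : (Llin v) 2 = ∫ t in (0:ℝ)..(2 * π),
            deriv (deriv f) (ι u (clamp t)) * (ι v (clamp t)) * (Φ t 0 0 * Φ t 0 0) := rfl
        rw [e0, e1, e2] at h
        have hrw : (fun t => deriv (deriv f) (ι u (clamp t)) * (ι v (clamp t)) *
            (ψ 0 * (-(Φ t 0 0 * Φ t 0 1)) + ψ 1 * (-(Φ t 0 1 * Φ t 0 1))
              + ψ 2 * (Φ t 0 0 * Φ t 0 0)))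
            = fun t => ψ 0 * (deriv (deriv f) (ι u (clamp t)) * (ι v (clamp t)) *
                (-(Φ t 0 0 * Φ t 0 1)))
              + (ψ 1 * (deriv (deriv f) (ι u (clamp t)) * (ι v (clamp t)) *
                (-(Φ t 0 1 * Φ t 0 1)))
              + ψ 2 * (deriv (deriv f) (ι u (clamp t)) * (ι v (clamp t)) *
                (Φ t 0 0 * Φ t 0 0))) := by
          funext t; ring
        rw [hrw, intervalIntegral.integral_add
            ((int_integrable ι _ _ hddc hw00 v).const_mul (ψ 0))
            (((int_integrable ι _ _ hddc hw01 v).const_mul (ψ 1)).add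
              ((int_integrable ι _ _ hddc hw10 v).const_mul (ψ 2))),
          intervalIntegral.integral_add
            ((int_integrable ι _ _ hddc hw01 v).const_mul (ψ 1))
            ((int_integrable ι _ _ hddc hw10 v).const_mul (ψ 2)),
          intervalIntegral.integral_const_mul, intervalIntegral.integral_const_mul,
          intervalIntegral.integral_const_mul]
        linarith [h]
      -- the continuous function that must vanish
      set hCm : C(Icc (0:ℝ) (2 * π), ℝ) :=
        ⟨fun s => deriv (deriv f) (ι u s) *
          (ψ 0 * (-(Φ (↑s) 0 0 * Φ (↑s) 0 1)) + ψ 1 * (-(Φ (↑s) 0 1 * Φ (↑s) 0 1))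
            + ψ 2 * (Φ (↑s) 0 0 * Φ (↑s) 0 0)), by
          have hyc : ∀ (i j : Fin 2),
              Continuous fun s : Icc (0:ℝ) (2 * π) => Φ (↑s) i j := fun i j =>
            (fm_cont hΦ i j).comp_continuous continuous_subtype_val (fun s => s.2)
          apply Continuous.mul
          · exact hf2.comp ((ι u).continuous)
          · apply Continuous.add
            · apply Continuous.add
              · exact continuous_const.mul ((hyc 0 0).mul (hyc 0 1)).neg
              · exact continuous_const.mul ((hyc 0 1).mul (hyc 0 1)).neg
            · exact continuous_const.mul ((hyc 0 0).mul (hyc 0 0))⟩ with hhCm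
      have hkey : ∀ v : Y, ∫ t in (0:ℝ)..(2 * π), hCm (clamp t) * (ι v) (clamp t) = 0 := by
        intro v
        rw [intervalIntegral.integral_congr
          (g := fun t => deriv (deriv f) (ι u (clamp t)) * (ι v (clamp t)) *
            (ψ 0 * (-(Φ t 0 0 * Φ t 0 1)) + ψ 1 * (-(Φ t 0 1 * Φ t 0 1))
              + ψ 2 * (Φ t 0 0 * Φ t 0 0))) ?_]
        · exact hcomb v
        · intro t ht
          rw [huIcc] at ht
          have hclamp : clamp t = ⟨t, ht⟩ := projIcc_of_mem _ ht
          dsimp only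
          rw [hhCm]
          simp only [ContinuousMap.coe_mk]
          rw [hclamp]
          ring
      have hkill := dense_kill ι hdense hCm hkey
      -- f'' ∘ u vanishes identically
      have hdd0 : ∀ s : Icc (0:ℝ) (2 * π), deriv (deriv f) (ι u s) = 0 := by
        by_contra hcon
        push_neg at hcon
        obtain ⟨s₀, hs₀⟩ := hcon
        have hdds : deriv (deriv f) (ι u (clamp ↑s₀)) ≠ 0 := by
          rw [clamp_val]; exact hs₀
        have hFo : IsOpen {x : ℝ | deriv (deriv f) (ι u (clamp x)) ≠ 0} :=
          isOpen_compl_singleton.preimage hddc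
        obtain ⟨ε, hε, hball⟩ := Metric.isOpen_iff.1 hFo ↑s₀ hdds
        have hs₀m := s₀.2
        have hs₀1 : (0:ℝ) ≤ ↑s₀ := hs₀m.1
        have hs₀2 : (↑s₀:ℝ) ≤ 2 * π := hs₀m.2
        set l := max ((s₀:ℝ) - ε/2) 0 with hl
        set r := min ((s₀:ℝ) + ε/2) (2 * π) with hr
        have hlr : l < r :=
          max_lt (lt_min (by linarith) (by linarith)) (lt_min (by linarith) hπ)
        have hsub : Ioo l r ⊆ Icc 0 (2 * π) := fun x hx =>
          ⟨le_of_lt (lt_of_le_of_lt (le_max_right _ _) hx.1),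
           le_of_lt (lt_of_lt_of_le hx.2 (min_le_right _ _))⟩
        refine fm_quad hπ hΦ hdet hlr hsub hABC ?_
        intro t ht
        have htI := hsub ht
        have hb : t ∈ Metric.ball ((s₀:ℝ)) ε := by
          rw [Metric.mem_ball, Real.dist_eq, abs_lt]
          have h1 : (s₀:ℝ) - ε/2 ≤ l := le_max_left _ _
          have h2 : r ≤ (s₀:ℝ) + ε/2 := min_le_left _ _
          constructor <;> linarith [ht.1, ht.2]
        have hne' : deriv (deriv f) (ι u (clamp t)) ≠ 0 := hball hb
        have hk := hkill ⟨t, htI⟩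
        rw [hhCm] at hk
        simp only [ContinuousMap.coe_mk] at hk
        have hclamp : clamp t = ⟨t, htI⟩ := projIcc_of_mem _ htI
        rw [← hclamp] at hk
        rcases mul_eq_zero.1 hk with h | h
        · exact absurd h hne'
        · have h' : ψ 0 * (-(Φ t 0 0 * Φ t 0 1)) + ψ 1 * (-(Φ t 0 1 * Φ t 0 1))
              + ψ 2 * (Φ t 0 0 * Φ t 0 0) = 0 := h
          linear_combination h'
      -- nonconstancy + IVT + nowhere-flatness give the contradiction
      push_neg at huc
      obtain ⟨s₁, hs₁⟩ := huc (ι u ⟨0, left_mem_Icc.2 h2le⟩)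
      set s₀' : Icc (0:ℝ) (2 * π) := ⟨0, left_mem_Icc.2 h2le⟩ with hs₀'
      have hAB : min (ι u s₀') (ι u s₁) < max (ι u s₀') (ι u s₁) :=
        min_lt_max.2 (Ne.symm hs₁)
      refine flat_contra hnf hAB ?_
      intro x hx
      have hφc : Continuous fun t : ℝ => ι u (clamp t) :=
        (ι u).continuous.comp clamp_continuous
      have him := intermediate_value_uIcc (a := ((s₀':Icc (0:ℝ) (2*π)):ℝ))
        (b := ((s₁:Icc (0:ℝ) (2*π)):ℝ)) (f := fun t : ℝ => ι u (clamp t)) hφc.continuousOn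
      have hxm : x ∈ uIcc (ι u (clamp ↑s₀')) (ι u (clamp ↑s₁)) := by
        rw [clamp_val, clamp_val]
        rcases le_total (ι u s₀') (ι u s₁) with hle | hle
        · rw [uIcc_of_le hle]
          rw [min_eq_left hle, max_eq_right hle] at hx
          exact Ioo_subset_Icc_self hx
        · rw [uIcc_of_ge hle]
          rw [min_eq_right hle, max_eq_left hle] at hx
          exact Ioo_subset_Icc_self hx
      obtain ⟨t, htm, hxt⟩ := him hxm
      rw [← hxt]
      exact hdd0 (clamp t)
    -- use surjectivity to hit the target matrix
    obtain ⟨v, hv⟩ := LinearMap.range_eq_top.1 hrange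
      (WithLp.toLp 2 ![M 0 0, M 0 1, M 1 0] : EuclideanSpace ℝ (Fin 3))
    refine ⟨v, ?_⟩
    have hv0 : (Llin v) 0 = M 0 0 := (congrArg (fun x => x 0) hv).trans rfl
    have hv1 : (Llin v) 1 = M 0 1 := (congrArg (fun x => x 1) hv).trans rfl
    have hv2 : (Llin v) 2 = M 1 0 := (congrArg (fun x => x 2) hv).trans rfl
    have e0 : (Llin v) 0 = ∫ t in (0:ℝ)..(2 * π),
        deriv (deriv f) (ι u (clamp t)) * (ι v (clamp t)) * (-(Φ t 0 0 * Φ t 0 1)) := rfl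
    have e1 : (Llin v) 1 = ∫ t in (0:ℝ)..(2 * π),
        deriv (deriv f) (ι u (clamp t)) * (ι v (clamp t)) * (-(Φ t 0 1 * Φ t 0 1)) := rfl
    have e2 : (Llin v) 2 = ∫ t in (0:ℝ)..(2 * π),
        deriv (deriv f) (ι u (clamp t)) * (ι v (clamp t)) * (Φ t 0 0 * Φ t 0 0) := rfl
    have hMe : (Matrix.of (fun i j : Fin 2 =>
        ∫ t in (0:ℝ)..(2 * π), deriv (deriv f) (ι u (clamp t)) * (ι v (clamp t)) *
          (((Φ t)⁻¹ * N0 * Φ t) i j))) = M := by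
      have htr : M 0 0 + M 1 1 = 0 := by
        rw [← Matrix.trace_fin_two]; exact hM
      have q00 : (∫ t in (0:ℝ)..(2 * π), deriv (deriv f) (ι u (clamp t)) * (ι v (clamp t)) *
          (((Φ t)⁻¹ * N0 * Φ t) 0 0)) = M 0 0 := by
        rw [hent v 0 0 _ h00, ← e0, hv0]
      have q01 : (∫ t in (0:ℝ)..(2 * π), deriv (deriv f) (ι u (clamp t)) * (ι v (clamp t)) *
          (((Φ t)⁻¹ * N0 * Φ t) 0 1)) = M 0 1 := by
        rw [hent v 0 1 _ h01, ← e1, hv1]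
      have q10 : (∫ t in (0:ℝ)..(2 * π), deriv (deriv f) (ι u (clamp t)) * (ι v (clamp t)) *
          (((Φ t)⁻¹ * N0 * Φ t) 1 0)) = M 1 0 := by
        rw [hent v 1 0 _ h10, ← e2, hv2]
      have q11 : (∫ t in (0:ℝ)..(2 * π), deriv (deriv f) (ι u (clamp t)) * (ι v (clamp t)) *
          (((Φ t)⁻¹ * N0 * Φ t) 1 1)) = M 1 1 := by
        rw [hI11 v, hent v 0 0 _ h00, ← e0, hv0]
        linarith [htr]
      ext i j
      fin_cases i <;> fin_cases j
      · exact q00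
      · exact q01
      · exact q10
      · exact q11
    rw [hMe]
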